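/- Under the relative friendship model, a player p_i will inoculate (inoculation strictly lowers its relative perceived cost) if and only if the size k_i of its attack component satisfies k_i > (|Γ(p_i)|·Cn/L + F·Σ_{j∈Γ̄(p_i)} k_j)/(|Γ(p_i)| + F·|Γ̄(p_i)|), where Γ(p_i) is p_i's neighborhood, Γ̄(p_i) its insecure neighbors, and k_j the attack component sizes of insecure neighbors when p_i is secure. -/

import Mathlib

open Finset

/-- Lemma (attack component threshold, relative friendship model).
Player `p_i` has `gsec` secure neighbors and insecure neighbors indexed by `s` (so its degree is
`|Γ(p_i)| = gsec + |s|`); the `k j` are the attack component sizes of the insecure neighbors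
assuming `p_i` is secure. Then `p_i` strictly prefers to inoculate (its relative perceived cost
as an insecure player in an attack component of size `ki` exceeds its relative perceived cost
when inoculated) if and only if
`ki > (|Γ(p_i)|·Cn/L + F·Σ_{j∈Γ̄} k j)/(|Γ(p_i)| + F·|Γ̄|)`. -/
theorem stmt14 {ι : Type*} (s : Finset ι) (k : ι → ℝ) (n C L F gsec ki : ℝ)
    (hn : 0 < n) (hL : 0 < L) (hF0 : 0 ≤ F) (hF1 : F ≤ 1)
    (hC : L / n < C) (hCL : C ≤ L)
    (hgsec : 0 ≤ gsec) (hdeg : 0 < gsec + (s.card : ℝ)) :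
    (L * ki / n + F / (gsec + (s.card : ℝ)) *
        (gsec * C + (s.card : ℝ) * (L * ki / n)) >
      C + F / (gsec + (s.card : ℝ)) * (gsec * C + ∑ j ∈ s, L * k j / n)) ↔
    ki > ((gsec + (s.card : ℝ)) * (C * n / L) + F * ∑ j ∈ s, k j) /
          ((gsec + (s.card : ℝ)) + F * (s.card : ℝ)) := by
  have hcard : (0:ℝ) ≤ s.card := Nat.cast_nonneg _
  have hD : 0 < (gsec + (s.card : ℝ)) + F * s.card := by positivity
  have hsum : ∑ j ∈ s, L * k j / n = L * (∑ j ∈ s, k j) / n := by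
    rw [Finset.mul_sum, Finset.sum_div]
  rw [hsum, gt_iff_lt, gt_iff_lt, div_lt_iff₀ hD]
  rw [show L * ki / n + F / (gsec + (s.card:ℝ)) * (gsec * C + (s.card:ℝ) * (L * ki / n)) =
    (L * ki * (gsec + (s.card:ℝ)) + F * (gsec * C * n + (s.card:ℝ) * (L * ki))) / (n * (gsec + (s.card:ℝ))) from by field_simp]
  rw [show C + F / (gsec + (s.card:ℝ)) * (gsec * C + L * (∑ j ∈ s, k j) / n) =
    (C * n * (gsec + (s.card:ℝ)) + F * (gsec * C * n + L * (∑ j ∈ s, k j))) / (n * (gsec + (s.card:ℝ))) from by field_simp]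
  rw [div_lt_div_iff₀ (by positivity) (by positivity),
    show (gsec + (s.card:ℝ)) * (C * n / L) + F * ∑ j ∈ s, k j =
      ((gsec + (s.card:ℝ)) * (C * n) + F * (∑ j ∈ s, k j) * L) / L from by field_simp; try ring,
    div_lt_iff₀ hL, mul_lt_mul_iff_of_pos_right (by positivity : (0:ℝ) < n * (gsec + (s.card:ℝ)))]
  constructor <;> intro h <;> nlinarith [h]
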